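/- For δ small enough: if ζ ∈ ℂⁿ satisfies |Im ζ| ≤ δ⟨Re ζ⟩ and |Re ζ| ≥ 1, then the principal branch square root ⟨ζ⟩ := (1 + ζ·ζ)^{1/2} is well defined (1 + ζ·ζ avoids the negative real axis) and satisfies Re⟨ζ⟩ ≥ |ζ|/2, |Im⟨ζ⟩| ≤ |ζ|/16, and |ζ| ≥ 1/2. -/

import Mathlib

open Complex
set_option maxHeartbeats 1000000

noncomputable section

/-- The Japanese bracket `⟨ξ⟩ = (1+|ξ|²)^{1/2}` on `ℝⁿ`. -/
def jbr {n : ℕ} (ξ : EuclideanSpace ℝ (Fin n)) : ℝ :=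
  Real.sqrt (1 + ‖ξ‖ ^ 2)

/-- Real part of a vector `ζ ∈ ℂⁿ`. -/
def reVec {n : ℕ} (ζ : EuclideanSpace ℂ (Fin n)) : EuclideanSpace ℝ (Fin n) :=
  (WithLp.equiv 2 (Fin n → ℝ)).symm fun j => (ζ j).re

/-- Imaginary part of a vector `ζ ∈ ℂⁿ`. -/
def imVec {n : ℕ} (ζ : EuclideanSpace ℂ (Fin n)) : EuclideanSpace ℝ (Fin n) :=
  (WithLp.equiv 2 (Fin n → ℝ)).symm fun j => (ζ j).im

/-- Elementary estimates on the analytic continuation `⟨ζ⟩ = (1+ζ·ζ)^{1/2}` of the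
Japanese bracket: for `δ` small enough and `|Im ζ| ≤ δ⟨Re ζ⟩`, `|Re ζ| ≥ 1`,
`1 + ζ·ζ` avoids the negative real axis, `Re⟨ζ⟩ ≥ |ζ|/2`, `|Im⟨ζ⟩| ≤ |ζ|/16`, and
`|ζ| ≥ 1/2`. -/
lemma aux_sqrt (w : ℂ) (hw : 0 < w.re) :
    0 < (w ^ ((1:ℂ)/2)).re ∧ Real.sqrt w.re ≤ (w ^ ((1:ℂ)/2)).re ∧
    |(w ^ ((1:ℂ)/2)).im| * (2 * (w ^ ((1:ℂ)/2)).re) = |w.im| := by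
  have hw0 : w ≠ 0 := fun h => by simp [h] at hw
  set s := w ^ ((1:ℂ)/2) with hs
  have hsq : s ^ 2 = w := by
    rw [hs, show (1:ℂ)/2 = ((2:ℕ):ℂ)⁻¹ by norm_num]
    exact Complex.cpow_nat_inv_pow w two_ne_zero
  have hre : 0 < s.re := by
    rw [hs, Complex.cpow_def_of_ne_zero hw0, Complex.exp_re]
    apply mul_pos (Real.exp_pos _)
    apply Real.cos_pos_of_mem_Ioo
    have harg : |Complex.arg w| < Real.pi/2 :=
      Complex.abs_arg_lt_pi_div_two_iff.mpr (Or.inl hw)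
    have him2 : (Complex.log w * ((1:ℂ)/2)).im = Complex.arg w / 2 := by
      simp [Complex.mul_im, Complex.log_im, Complex.log_re]; ring
    rw [him2]
    have := abs_lt.mp harg
    constructor <;> [nlinarith [Real.pi_pos]; nlinarith [Real.pi_pos]]
  have hre2 : w.re = s.re^2 - s.im^2 := by
    rw [← hsq, pow_two, Complex.mul_re]; ring
  have him : w.im = 2 * s.re * s.im := by
    rw [← hsq, pow_two, Complex.mul_im]; ring
  refine ⟨hre, ?_, ?_⟩
  · have h1 : w.re ≤ s.re^2 := by nlinarith [sq_nonneg s.im]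
    calc Real.sqrt w.re ≤ Real.sqrt (s.re^2) := Real.sqrt_le_sqrt h1
    _ = s.re := Real.sqrt_sq hre.le
  · rw [him, abs_mul, abs_mul, _root_.abs_two, abs_of_pos hre]; ring

theorem bracket_analytic_continuation (n : ℕ) :
    ∃ δ₀ : ℝ, 0 < δ₀ ∧ ∀ δ : ℝ, 0 < δ → δ ≤ δ₀ →
      ∀ ζ : EuclideanSpace ℂ (Fin n),
        ‖imVec ζ‖ ≤ δ * jbr (reVec ζ) → 1 ≤ ‖reVec ζ‖ →
        ¬((1 + ∑ j, (ζ j) ^ 2).im = 0 ∧ (1 + ∑ j, (ζ j) ^ 2).re ≤ 0) ∧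
        ‖ζ‖ / 2 ≤ (((1 + ∑ j, (ζ j) ^ 2) ^ ((1 : ℂ) / 2)).re) ∧
        |(((1 + ∑ j, (ζ j) ^ 2) ^ ((1 : ℂ) / 2)).im)| ≤ ‖ζ‖ / 16 ∧
        1 / 2 ≤ ‖ζ‖ := by
  refine ⟨1/32, by norm_num, fun δ hδ hδ0 ζ hy hx => ?_⟩
  set x := reVec ζ with hxdef
  set y := imVec ζ with hydef
  set w : ℂ := 1 + ∑ j, (ζ j)^2 with hwdef
  set a := ‖x‖ with hadef
  set b := ‖y‖ with hbdef
  have ha0 : 0 ≤ a := norm_nonneg _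
  have hb0 : 0 ≤ b := norm_nonneg _
  have hxj : ∀ j, x j = (ζ j).re := fun j => rfl
  have hyj : ∀ j, y j = (ζ j).im := fun j => rfl
  -- squared norms as sums
  have ha2 : a^2 = ∑ j, (ζ j).re^2 := by
    rw [hadef, EuclideanSpace.norm_eq, Real.sq_sqrt (by positivity)]
    exact Finset.sum_congr rfl fun j _ => by rw [hxj, Real.norm_eq_abs, _root_.sq_abs]
  have hb2 : b^2 = ∑ j, (ζ j).im^2 := by
    rw [hbdef, EuclideanSpace.norm_eq, Real.sq_sqrt (by positivity)]
    exact Finset.sum_congr rfl fun j _ => by rw [hyj, Real.norm_eq_abs, _root_.sq_abs]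
  have hn2 : ‖ζ‖^2 = a^2 + b^2 := by
    rw [EuclideanSpace.norm_eq, Real.sq_sqrt (by positivity), ha2, hb2,
      ← Finset.sum_add_distrib]
    exact Finset.sum_congr rfl fun j _ => by
      rw [Complex.sq_norm, Complex.normSq_apply]; ring
  -- the bound on b
  have hbδ : b^2 ≤ δ^2 * (1 + a^2) := by
    have h1 : b ≤ δ * Real.sqrt (1 + a^2) := hy
    have h2 : (δ * Real.sqrt (1 + a^2))^2 = δ^2 * (1 + a^2) := by
      rw [mul_pow, Real.sq_sqrt (by positivity)]
    nlinarith [Real.sqrt_nonneg (1 + a^2)]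
  have hδ2 : δ^2 ≤ 1/1024 := by nlinarith
  have hB : b^2 ≤ (1 + a^2)/1024 := by nlinarith [sq_nonneg a]
  -- real and imaginary parts of w
  have hwre : w.re = 1 + a^2 - b^2 := by
    have h : ∀ j : Fin n, ((ζ j)^2).re = (ζ j).re^2 - (ζ j).im^2 := fun j => by
      rw [pow_two, Complex.mul_re]; ring
    simp only [hwdef, Complex.add_re, Complex.one_re, Complex.re_sum, h,
      Finset.sum_sub_distrib]
    rw [← ha2, ← hb2]; ring
  have hwim : |w.im| ≤ 2 * (a * b) := by
    have hinner : (inner ℝ x y : ℝ) = ∑ j, (ζ j).re * (ζ j).im := by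
      rw [PiLp.inner_apply]
      exact Finset.sum_congr rfl fun j _ => by
        rw [hxj, hyj, RCLike.inner_apply]; simp [mul_comm]
    have hcs : |(inner ℝ x y : ℝ)| ≤ a * b := abs_real_inner_le_norm x y
    have him : w.im = 2 * (inner ℝ x y : ℝ) := by
      have h : ∀ j : Fin n, ((ζ j)^2).im = 2 * ((ζ j).re * (ζ j).im) := fun j => by
        rw [pow_two, Complex.mul_im]; ring
      simp only [hwdef, Complex.add_im, Complex.one_im, Complex.im_sum, h,
        ← Finset.mul_sum, hinner, zero_add]
    rw [him, abs_mul, _root_.abs_two]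
    nlinarith
  -- positivity of Re w
  have hwpos : 0 < w.re := by rw [hwre]; nlinarith
  obtain ⟨hspos, hsge, hsim⟩ := aux_sqrt w hwpos
  have hn1 : 1 ≤ ‖ζ‖ := by nlinarith [norm_nonneg ζ]
  refine ⟨fun h => absurd h.2 (by linarith), ?_, ?_, by linarith⟩
  · -- Re part
    have hle : ‖ζ‖^2/4 ≤ w.re := by rw [hwre]; nlinarith
    calc ‖ζ‖/2 = Real.sqrt (‖ζ‖^2/4) := by
          rw [show ‖ζ‖^2/4 = (‖ζ‖/2)^2 by ring, Real.sqrt_sq (by positivity)]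
    _ ≤ Real.sqrt w.re := Real.sqrt_le_sqrt hle
    _ ≤ (w ^ ((1:ℂ)/2)).re := hsge
  · -- Im part
    set r := Real.sqrt w.re with hrdef
    have hr0 : 0 ≤ r := Real.sqrt_nonneg _
    have hr2 : r^2 = w.re := Real.sq_sqrt hwpos.le
    have key : 2 * (a * b) ≤ ‖ζ‖ * r / 8 := by
      have h1 : (2 * (a * b))^2 ≤ (‖ζ‖ * r / 8)^2 := by
        have hN2 : (‖ζ‖ * r / 8)^2 = (a^2 + b^2) * (1 + a^2 - b^2) / 64 := by
          rw [div_pow, mul_pow, hn2, hr2, hwre]; ring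
        rw [hN2]
        nlinarith [sq_nonneg a, sq_nonneg b, sq_nonneg (a*b),
          mul_nonneg (sq_nonneg a) (le_trans (sq_nonneg b) hB), hB, sq_nonneg (a^2 - 1)]
      have h2 : 0 ≤ 2 * (a * b) := by positivity
      have h3 : 0 ≤ ‖ζ‖ * r / 8 := by positivity
      nlinarith
    have hfin : |w.im| ≤ ‖ζ‖/16 * (2 * (w ^ ((1:ℂ)/2)).re) := by
      calc |w.im| ≤ 2 * (a * b) := hwim
      _ ≤ ‖ζ‖ * r / 8 := key
      _ ≤ ‖ζ‖/16 * (2 * (w ^ ((1:ℂ)/2)).re) := by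
          have : r ≤ (w ^ ((1:ℂ)/2)).re := hsge
          nlinarith [norm_nonneg ζ]
    have h2pos : 0 < 2 * (w ^ ((1:ℂ)/2)).re := by linarith
    have := hsim.le.trans hfin
    exact le_of_mul_le_mul_right this h2pos

end
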